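/- The following identities hold for the angles π/5 and 2π/5: (i) 5·cot(π/5)·cot(2π/5) = 2·(cos(π/5) + cos(2π/5)); (ii) csc(π/5)·cot(π/5) + csc(2π/5)·cot(2π/5) = 6·cot(π/5)·cot(2π/5); (iii) −csc(π/5)·cot(π/5) + csc(2π/5)·cot(2π/5) = −2. (These are the trigonometric identities used in the Spin-number and Sign-number computations in the proof of Lemma 2.10.) -/

import Mathlib

open Real

/-- Trigonometric identities for the angles `π/5` and `2π/5` used in the
Spin-number and Sign-number computations in the proof of Lemma 2.10 (here
`csc x = (sin x)⁻¹` and `cot x = cos x / sin x`):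
(i) `5·cot(π/5)·cot(2π/5) = 2·(cos(π/5) + cos(2π/5))`;
(ii) `csc(π/5)·cot(π/5) + csc(2π/5)·cot(2π/5) = 6·cot(π/5)·cot(2π/5)`;
(iii) `−csc(π/5)·cot(π/5) + csc(2π/5)·cot(2π/5) = −2`. -/
theorem stmt17 :
    5 * (cos (π / 5) / sin (π / 5)) * (cos (2 * π / 5) / sin (2 * π / 5)) =
      2 * (cos (π / 5) + cos (2 * π / 5)) ∧
    (sin (π / 5))⁻¹ * (cos (π / 5) / sin (π / 5)) +
        (sin (2 * π / 5))⁻¹ * (cos (2 * π / 5) / sin (2 * π / 5)) =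
      6 * (cos (π / 5) / sin (π / 5)) * (cos (2 * π / 5) / sin (2 * π / 5)) ∧
    -((sin (π / 5))⁻¹ * (cos (π / 5) / sin (π / 5))) +
        (sin (2 * π / 5))⁻¹ * (cos (2 * π / 5) / sin (2 * π / 5)) = -2 := by
  have hπ := pi_pos
  have hs1 : 0 < sin (π / 5) := sin_pos_of_pos_of_lt_pi (by linarith) (by linarith)
  have hs2 : 0 < sin (2 * π / 5) := sin_pos_of_pos_of_lt_pi (by linarith) (by linarith)
  have h5 : √5 ^ 2 = 5 := Real.sq_sqrt (by norm_num)
  have h5pos : (0:ℝ) < √5 := Real.sqrt_pos.mpr (by norm_num)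
  have hc1 : cos (π / 5) = (1 + √5) / 4 := cos_pi_div_five
  have hc2 : cos (2 * π / 5) = (√5 - 1) / 4 := by
    have : (2 * π / 5) = 2 * (π / 5) := by ring
    rw [this, cos_two_mul, hc1]
    nlinarith [h5]
  have hs1sq : sin (π / 5) ^ 2 = (10 - 2 * √5) / 16 := by
    have := sin_sq_add_cos_sq (π / 5)
    rw [hc1] at this
    nlinarith [h5]
  have hs2sq : sin (2 * π / 5) ^ 2 = (10 + 2 * √5) / 16 := by
    have := sin_sq_add_cos_sq (2 * π / 5)
    rw [hc2] at this
    nlinarith [h5]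
  have hs12 : sin (π / 5) * sin (2 * π / 5) = √5 / 4 := by
    have hsq : (sin (π / 5) * sin (2 * π / 5)) ^ 2 = (√5 / 4) ^ 2 := by
      rw [mul_pow, hs1sq, hs2sq]
      nlinarith [h5]
    nlinarith [mul_pos hs1 hs2, h5pos]
  have hne1 : sin (π / 5) ≠ 0 := ne_of_gt hs1
  have hne2 : sin (2 * π / 5) ≠ 0 := ne_of_gt hs2
  have hd1 : sin (π / 5) ^ 2 = (10 - 2 * √5) / 16 := hs1sq
  have hd2 : ((10 : ℝ) - 2 * √5) ≠ 0 := by nlinarith [h5, h5pos]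
  have hd3 : ((10 : ℝ) + 2 * √5) ≠ 0 := by nlinarith [h5pos]
  have h5ne : √5 ≠ 0 := ne_of_gt h5pos
  have e1 : (sin (π / 5))⁻¹ * (cos (π / 5) / sin (π / 5)) = cos (π / 5) / sin (π / 5) ^ 2 := by
    field_simp
  have e2 : (sin (2 * π / 5))⁻¹ * (cos (2 * π / 5) / sin (2 * π / 5)) =
      cos (2 * π / 5) / sin (2 * π / 5) ^ 2 := by
    field_simp
  have e3 : ∀ k : ℝ, k * (cos (π / 5) / sin (π / 5)) * (cos (2 * π / 5) / sin (2 * π / 5)) =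
      k * (cos (π / 5) * cos (2 * π / 5)) / (sin (π / 5) * sin (2 * π / 5)) := by
    intro k; field_simp
  refine ⟨?_, ?_, ?_⟩
  · rw [e3, hs12, hc1, hc2]
    field_simp
    linear_combination h5
  · rw [e1, e2, e3, hs12, hs1sq, hs2sq, hc1, hc2]
    have hd2' : (10 : ℝ) - √5 * 2 ≠ 0 := by nlinarith [h5, h5pos]
    field_simp
    linear_combination (24 * √5 ^ 2 - 120) * h5
  · rw [e1, e2, hs1sq, hs2sq, hc1, hc2]
    have hd2' : (10 : ℝ) - √5 * 2 ≠ 0 := by nlinarith [h5, h5pos]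
    field_simp
    linear_combination (-96) * h5
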